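/- Let Λ(β) = rα(1−β) − θκ(β) where κ(β) = √((1/2 + a/σ²)² + αβ(β−1)) − (1/2 + a/σ²). If α ≥ θ²/r², then Λ'(β) < 0 for all β ∈ ℝ, so Λ is strictly decreasing. -/

import Mathlib

/-- Under the 3/2 model, if α ≥ θ²/r² then Λ(β) = rα(1−β) − θκ(β) has
negative derivative everywhere and is strictly decreasing. -/
theorem three_halves_decreasing (r a θ σ α : ℝ) (hr : 0 < r) (ha : 0 < a)
    (hθ : 0 < θ) (hσ : 0 < σ) (hα0 : 0 < α) (hα1 : α ≤ 1)
    (hpos : ∀ β : ℝ, 0 < (1/2 + a/σ^2)^2 + α*β*(β-1))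
    (hcase : α ≥ θ^2 / r^2)
    (Λ : ℝ → ℝ)
    (hΛ : ∀ β, Λ β = r * α * (1 - β)
        - θ * (Real.sqrt ((1/2 + a/σ^2)^2 + α*β*(β-1)) - (1/2 + a/σ^2))) :
    (∀ β : ℝ, deriv Λ β < 0) ∧ StrictAnti Λ := by
  set c : ℝ := 1/2 + a/σ^2 with hc
  clear_value c
  have hΛfun : Λ = fun β => r * α * (1 - β)
      - θ * (Real.sqrt (c^2 + α*β*(β-1)) - c) := funext hΛ
  have hchalf : (1:ℝ)/2 < c := by
    have : 0 < a/σ^2 := by positivity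
    rw [hc]; linarith
  have hr2α : θ^2 ≤ r^2 * α := by
    rw [ge_iff_le, div_le_iff₀ (by positivity)] at hcase
    linarith [hcase]
  have hder : ∀ β : ℝ, HasDerivAt Λ
      (-(r*α) - θ * ((α*(2*β-1)) / (2 * Real.sqrt (c^2 + α*β*(β-1))))) β := by
    intro β
    have hQβ := hpos β
    have h1 : HasDerivAt (fun β : ℝ => c^2 + α*β*(β-1)) (α*(2*β-1)) β := by
      have h := (((hasDerivAt_id β).const_mul α).mul
        ((hasDerivAt_id β).sub_const 1)).const_add (c^2)
      exact h.congr_deriv (by simp only [id]; ring)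
    have h2 := (h1.sqrt (ne_of_gt hQβ)).sub_const c
    have h3 := ((hasDerivAt_id β).const_sub 1).const_mul (r*α)
    have h4 := h3.sub (h2.const_mul θ)
    rw [hΛfun]
    exact h4.congr_deriv (by ring)
  have hneg : ∀ β : ℝ, deriv Λ β < 0 := by
    intro β
    rw [(hder β).deriv]
    have hQβ := hpos β
    set s : ℝ := Real.sqrt (c^2 + α*β*(β-1)) with hs
    have hspos : 0 < s := Real.sqrt_pos.mpr hQβ
    have hs2 : s^2 = c^2 + α*β*(β-1) := Real.sq_sqrt (le_of_lt hQβ)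
    have hkey : θ*(1-2*β) < 2*r*s := by
      rcases le_or_gt (1-2*β) 0 with h | h
      · nlinarith [mul_pos hr hspos]
      · have hsq : (θ*(1-2*β))^2 < (2*r*s)^2 := by
          have h1 : (1:ℝ) < 2*c := by linarith
          have hc4 : α < 4*c^2 := by
            nlinarith [mul_lt_mul_of_pos_left h1 (show (0:ℝ) < 2*c by linarith)]
          nlinarith [mul_le_mul_of_nonneg_right hr2α (sq_nonneg (1-2*β)),
            mul_lt_mul_of_pos_left hc4 (mul_pos hr hr), hs2]
        exact lt_of_pow_lt_pow_left₀ 2 (by positivity) hsq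
    have hdiv : -(r*α) < θ * ((α*(2*β-1)) / (2*s)) := by
      rw [mul_div_assoc'] at *
      rw [lt_div_iff₀ (by positivity : (0:ℝ) < 2*s)]
      nlinarith [mul_pos hα0 (sub_pos.mpr hkey)]
    linarith
  exact ⟨hneg, strictAnti_of_deriv_neg hneg⟩
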